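/- Let S and A be measurable spaces, δ a real discount factor with 0 < δ < 1, K a Markov kernel from S × A to S, r : S × A → ℝ a bounded measurable reward, and π : S → A a measurable stationary policy with value V_π. Let σ = (σ_n)_{n∈ℕ} be any history-dependent deterministic policy, where σ_n maps a history (s_0, …, s_n) measurably to an action, with value V_σ(s) = ∫ (∑_{t=0}^∞ δ^t·(1 − δ)·r(s_t, σ_t(s_0,…,s_t))) ∂P^σ_s. Then the performance-difference identity holds: V_σ(s) − V_π(s) = ∫ (∑_{t=0}^∞ δ^t·[ (1 − δ)·r(s_t, a_t) + δ·∫ V_π(s′) ∂K(s_t, a_t) − V_π(s_t) ]) ∂P^σ_s, where a_t = σ_t(s_0,…,s_t). -/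

import Mathlib

open MeasureTheory ProbabilityTheory

/-- Prepending an initial state to a trajectory. -/
def prepend {S : Type*} (s : S) (ω : ℕ → S) : ℕ → S
  | 0 => s
  | n + 1 => ω n

/-- The continuation of a history-dependent policy `σ` after an initial state `s`:
at time `n` with history `h`, it plays what `σ` plays at time `n + 1` with history `s :: h`. -/
def shiftPol {S A : Type*} (σ : (n : ℕ) → (Fin (n + 1) → S) → A) (s : S) :
    (n : ℕ) → (Fin (n + 1) → S) → A :=
  fun n h => σ (n + 1) (Fin.cases s h)

section Aux

variable {α β : Type*} [MeasurableSpace α] [MeasurableSpace β]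

lemma bdd_integrable (μ : Measure α) [IsFiniteMeasure μ] {f : α → ℝ} (hf : Measurable f)
    {C : ℝ} (hC : ∀ x, |f x| ≤ C) : Integrable f μ :=
  Integrable.mono' (integrable_const C) hf.aestronglyMeasurable
    (Filter.Eventually.of_forall fun x => by simpa [Real.norm_eq_abs] using hC x)

lemma abs_integral_le (μ : Measure α) [IsProbabilityMeasure μ] {f : α → ℝ} {C : ℝ}
    (h : ∀ x, |f x| ≤ C) : |∫ x, f x ∂μ| ≤ C := by
  have := norm_integral_le_of_norm_le_const (μ := μ) (f := f) (C := C)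
    (Filter.Eventually.of_forall fun x => by simpa [Real.norm_eq_abs] using h x)
  simpa [Real.norm_eq_abs] using this

lemma isProbabilityMeasure_bind {μ : Measure α} [IsProbabilityMeasure μ]
    {κ : α → Measure β} (hκ : Measurable κ) (h : ∀ a, IsProbabilityMeasure (κ a)) :
    IsProbabilityMeasure (μ.bind κ) := by
  constructor
  rw [Measure.bind_apply MeasurableSet.univ hκ.aemeasurable]
  have : ∀ a, κ a Set.univ = 1 := fun a => (h a).measure_univ
  simp [this]

lemma integral_bind_bdd (μ : Measure α) [IsProbabilityMeasure μ]
    {κ : α → Measure β} (hκ : Measurable κ) (hκp : ∀ a, IsProbabilityMeasure (κ a))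
    {f : β → ℝ} (hf : Measurable f) {C : ℝ} (hC : ∀ b, |f b| ≤ C) :
    ∫ b, f b ∂(μ.bind κ) = ∫ a, ∫ b, f b ∂(κ a) ∂μ := by
  haveI := isProbabilityMeasure_bind (μ := μ) hκ hκp
  set g : β → ℝ := fun b => f b + C with hg
  have hg0 : ∀ b, 0 ≤ g b := fun b => by
    have := (abs_le.mp (hC b)).1; simp only [hg]; linarith
  have hgm : Measurable g := hf.add measurable_const
  have hgC : ∀ b, |g b| ≤ C + |C| := fun b =>
    (abs_add_le _ _).trans (add_le_add (hC b) le_rfl)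
  have hinner : ∀ (ν : Measure β), IsProbabilityMeasure ν →
      ∫⁻ b, ENNReal.ofReal (g b) ∂ν = ENNReal.ofReal (∫ b, g b ∂ν) := by
    intro ν hν
    haveI := hν
    exact (ofReal_integral_eq_lintegral_ofReal (bdd_integrable ν hgm hgC)
      (Filter.Eventually.of_forall hg0)).symm
  have hintf : ∀ (ν : Measure β), IsProbabilityMeasure ν →
      ∫ b, g b ∂ν = ∫ b, f b ∂ν + C := by
    intro ν hν
    haveI := hν
    rw [hg]
    rw [integral_add (bdd_integrable ν hf hC) (integrable_const C), integral_const]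
    simp
  have h2 : ∫ b, g b ∂(μ.bind κ) = ∫ b, f b ∂(μ.bind κ) + C := hintf _ inferInstance
  have e1 : ∀ a, ∫⁻ b, ENNReal.ofReal (g b) ∂(κ a) = ENNReal.ofReal (∫ b, g b ∂(κ a)) :=
    fun a => hinner (κ a) (hκp a)
  have hGm : Measurable fun a => ∫ b, g b ∂(κ a) := by
    have he : (fun a => ∫ b, g b ∂(κ a))
        = fun a => (∫⁻ b, ENNReal.ofReal (g b) ∂(κ a)).toReal := by
      funext a
      rw [e1 a, ENNReal.toReal_ofReal (integral_nonneg hg0)]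
    rw [he]
    exact ((Measure.measurable_lintegral (ENNReal.measurable_ofReal.comp hgm)).comp
      hκ).ennreal_toReal
  have hGbd : ∀ a, |∫ b, g b ∂(κ a)| ≤ C + |C| := fun a => by
    haveI := hκp a
    exact abs_integral_le (κ a) hgC
  have h3 : ∫ b, g b ∂(μ.bind κ) = ∫ a, ∫ b, g b ∂(κ a) ∂μ := by
    rw [integral_eq_lintegral_of_nonneg_ae (Filter.Eventually.of_forall hg0)
      hgm.aestronglyMeasurable]
    rw [Measure.lintegral_bind hκ.aemeasurable hgm.ennreal_ofReal.aemeasurable]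
    rw [lintegral_congr e1]
    rw [← ofReal_integral_eq_lintegral_ofReal (bdd_integrable μ hGm hGbd)
      (Filter.Eventually.of_forall fun a => integral_nonneg hg0)]
    rw [ENNReal.toReal_ofReal (integral_nonneg fun a => integral_nonneg hg0)]
  have h4 : ∫ a, ∫ b, g b ∂(κ a) ∂μ = (∫ a, ∫ b, f b ∂(κ a) ∂μ) + C := by
    have e : ∀ a, ∫ b, g b ∂(κ a) = ∫ b, f b ∂(κ a) + C := fun a => hintf _ (hκp a)
    have hFm : Measurable fun a => ∫ b, f b ∂(κ a) := by
      have : (fun a => ∫ b, f b ∂(κ a)) = fun a => (∫ b, g b ∂(κ a)) - C := by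
        funext a; rw [e a]; ring
      rw [this]; exact hGm.sub measurable_const
    have hFbd : ∀ a, |∫ b, f b ∂(κ a)| ≤ C := fun a => by
      haveI := hκp a
      exact abs_integral_le (κ a) hC
    rw [integral_congr_ae (Filter.Eventually.of_forall e),
      integral_add (bdd_integrable μ hFm hFbd) (integrable_const C), integral_const]
    simp
  linarith [h2, h3, h4]

lemma measurable_prepend (s : α) : Measurable (prepend s : (ℕ → α) → ℕ → α) :=
  measurable_pi_lambda _ fun n => by
    cases n with
    | zero => exact measurable_const
    | succ m => exact measurable_pi_apply m

lemma measurable_finCases (s : α) (n : ℕ) :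
    Measurable fun h : Fin (n + 1) → α => (Fin.cases s h : Fin (n + 2) → α) :=
  measurable_pi_lambda _ fun i => by
    induction i using Fin.cases with
    | zero => simpa using measurable_const
    | succ j => simpa using measurable_pi_apply j

lemma measurable_shiftPol {A : Type*} [MeasurableSpace A]
    {σ : (n : ℕ) → (Fin (n + 1) → α) → A} (hσ : ∀ n, Measurable (σ n)) (s : α) :
    ∀ n, Measurable (shiftPol σ s n) :=
  fun n => (hσ (n + 1)).comp (measurable_finCases s n)

lemma prepend_hist (x : α) (ω : ℕ → α) (t : ℕ) :
    (fun i : Fin (t + 2) => prepend x ω ↑i) = Fin.cases x (fun i : Fin (t + 1) => ω ↑i) := by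
  funext i
  induction i using Fin.cases with
  | zero => rfl
  | succ j => simp [prepend]

end Aux

/-- Performance-difference identity: for a stationary policy `π` with value `Vπ` (the unique
bounded measurable solution of its Bellman recursion) and any history-dependent deterministic
policy `σ` with Ionescu–Tulcea trajectory measures `Pσ σ s` (characterized by the one-step
disintegration through the shifted policy), the difference between the value of `σ` and the
value of `π` at `s` equals the expected discounted sum of the one-step advantages of `σ`'s
actions relative to `Vπ` along trajectories of `σ`. -/
theorem performance_difference_identity
    {S A : Type*} [MeasurableSpace S] [MeasurableSpace A]
    (δ : ℝ) (hδ0 : 0 < δ) (hδ1 : δ < 1)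
    (K : Kernel (S × A) S) [IsMarkovKernel K]
    (r : S × A → ℝ) (hr_meas : Measurable r) (hr_bd : ∃ C, ∀ p, |r p| ≤ C)
    (π : S → A) (hπ_meas : Measurable π)
    (Vπ : S → ℝ) (hV_meas : Measurable Vπ) (hV_bd : ∃ C, ∀ s, |Vπ s| ≤ C)
    (hV_bellman : ∀ s, Vπ s = (1 - δ) * r (s, π s) + δ * ∫ s', Vπ s' ∂(K (s, π s)))
    (Pσ : ((n : ℕ) → (Fin (n + 1) → S) → A) → S → Measure (ℕ → S))
    (hP_prob : ∀ σ s, IsProbabilityMeasure (Pσ σ s))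
    (hP_meas : ∀ σ : (n : ℕ) → (Fin (n + 1) → S) → A,
      (∀ n, Measurable (σ n)) → Measurable (Pσ σ))
    (hP_rec : ∀ σ : (n : ℕ) → (Fin (n + 1) → S) → A, (∀ n, Measurable (σ n)) → ∀ s,
      Pσ σ s = (K (s, σ 0 fun _ => s)).bind fun s₁ =>
        (Pσ (shiftPol σ s) s₁).map (prepend s))
    (σ : (n : ℕ) → (Fin (n + 1) → S) → A) (hσ_meas : ∀ n, Measurable (σ n)) (s : S) :
    (∫ ω, (∑' t : ℕ, δ ^ t * (1 - δ) * r (ω t, σ t fun i => ω i)) ∂(Pσ σ s)) - Vπ s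
      = ∫ ω, (∑' t : ℕ, δ ^ t *
          ((1 - δ) * r (ω t, σ t fun i => ω i)
            + δ * (∫ s', Vπ s' ∂(K (ω t, σ t fun i => ω i))) - Vπ (ω t))) ∂(Pσ σ s) := by
  obtain ⟨Cr, hCr⟩ := hr_bd
  obtain ⟨Cv, hCv⟩ := hV_bd
  have hCr0 : 0 ≤ Cr := le_trans (abs_nonneg _) (hCr (s, π s))
  have hCv0 : 0 ≤ Cv := le_trans (abs_nonneg _) (hCv s)
  have hδ0' : (0:ℝ) ≤ δ := hδ0.le
  have h1δ : (0:ℝ) ≤ 1 - δ := by linarith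
  have hδt : ∀ t : ℕ, (0:ℝ) ≤ δ ^ t := fun t => pow_nonneg hδ0' t
  haveI hPs := hP_prob σ s
  have hPuniv : ∀ τ x, (Pσ τ x) Set.univ = 1 := fun τ x => (hP_prob τ x).measure_univ
  have hW_meas : Measurable fun p : S × A => ∫ s', Vπ s' ∂(K p) :=
    (StronglyMeasurable.integral_kernel_prod_right' (κ := K)
      ((hV_meas.comp measurable_snd).stronglyMeasurable)).measurable
  have hW_bd : ∀ p : S × A, |∫ s', Vπ s' ∂(K p)| ≤ Cv := fun p => abs_integral_le (K p) hCv
  have hhist : ∀ t : ℕ, Measurable fun ω : ℕ → S => (fun i : Fin (t+1) => ω ↑i) :=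
    fun t => measurable_pi_lambda _ fun i => measurable_pi_apply _
  -- one-step disintegration of integrals
  have step : ∀ (τ : (n : ℕ) → (Fin (n + 1) → S) → A), (∀ n, Measurable (τ n)) → ∀ (x : S)
      (F : (ℕ → S) → ℝ), Measurable F → ∀ (C : ℝ), (∀ ω, |F ω| ≤ C) →
      ∫ ω, F ω ∂(Pσ τ x)
        = ∫ s₁, ∫ ω, F (prepend x ω) ∂(Pσ (shiftPol τ x) s₁) ∂(K (x, τ 0 fun _ => x)) := by
    intro τ hτ x F hF C hC
    rw [hP_rec τ hτ x]
    rw [integral_bind_bdd (K (x, τ 0 fun _ => x))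
      (κ := fun s₁ => (Pσ (shiftPol τ x) s₁).map (prepend x))
      ((Measure.measurable_map _ (measurable_prepend x)).comp
        (hP_meas _ (measurable_shiftPol hτ x)))
      (fun s₁ => by
        haveI := hP_prob (shiftPol τ x) s₁
        exact Measure.isProbabilityMeasure_map (measurable_prepend x).aemeasurable)
      hF hC]
    refine integral_congr_ae (Filter.Eventually.of_forall fun s₁ => ?_)
    exact integral_map (measurable_prepend x).aemeasurable hF.aestronglyMeasurable
  have hf0 : ∀ (τ : (n : ℕ) → (Fin (n + 1) → S) → A), (∀ n, Measurable (τ n)) → ∀ x : S,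
      ∫ ω, Vπ (ω 0) ∂(Pσ τ x) = Vπ x := by
    intro τ hτ x
    rw [step τ hτ x (fun ω => Vπ (ω 0)) (hV_meas.comp (measurable_pi_apply 0)) Cv (fun ω => hCv _)]
    simp [prepend, integral_const, hPuniv]
  have hfs : ∀ (t : ℕ) (τ : (n : ℕ) → (Fin (n + 1) → S) → A), (∀ n, Measurable (τ n)) →
      ∀ x : S, ∫ ω, Vπ (ω (t+1)) ∂(Pσ τ x)
        = ∫ s₁, ∫ ω, Vπ (ω t) ∂(Pσ (shiftPol τ x) s₁) ∂(K (x, τ 0 fun _ => x)) := by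
    intro t τ hτ x
    exact step τ hτ x (fun ω => Vπ (ω (t+1))) (hV_meas.comp (measurable_pi_apply (t+1))) Cv (fun ω => hCv _)
  have hA : ∀ (t : ℕ) (τ : (n : ℕ) → (Fin (n + 1) → S) → A), (∀ n, Measurable (τ n)) →
      ∀ x : S, ∫ ω, (∫ s', Vπ s' ∂(K (ω t, τ t fun i => ω i))) ∂(Pσ τ x)
        = ∫ ω, Vπ (ω (t+1)) ∂(Pσ τ x) := by
    intro t
    induction t with
    | zero =>
      intro τ hτ x
      have hLHS : ∫ ω, (∫ s', Vπ s' ∂(K (ω 0, τ 0 fun i => ω i))) ∂(Pσ τ x)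
          = ∫ s', Vπ s' ∂(K (x, τ 0 fun _ => x)) := by
        rw [step τ hτ x (fun ω => ∫ s', Vπ s' ∂(K (ω 0, τ 0 fun i => ω i)))
          (hW_meas.comp ((measurable_pi_apply 0).prodMk ((hτ 0).comp (hhist 0))))
          Cv (fun ω => hW_bd _)]
        have e : ∀ ω : ℕ → S,
            (∫ s', Vπ s' ∂(K (prepend x ω 0, τ 0 fun i => prepend x ω ↑i)))
              = ∫ s', Vπ s' ∂(K (x, τ 0 fun _ => x)) := by
          intro ω
          have : (fun i : Fin 1 => prepend x ω ↑i) = (fun _ => x) := by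
            funext i
            rw [Fin.eq_zero i]
            rfl
          rw [this]
          rfl
        simp only [e, integral_const, hPuniv, ENNReal.toReal_one, one_smul]
        simp
      have hRHS : ∫ ω, Vπ (ω 1) ∂(Pσ τ x) = ∫ s', Vπ s' ∂(K (x, τ 0 fun _ => x)) := by
        rw [hfs 0 τ hτ x]
        exact integral_congr_ae (Filter.Eventually.of_forall fun s₁ =>
          hf0 _ (measurable_shiftPol hτ x) s₁)
      rw [hLHS, hRHS]
    | succ t ih =>
      intro τ hτ x
      rw [step τ hτ x (fun ω => ∫ s', Vπ s' ∂(K (ω (t+1), τ (t+1) fun i => ω i)))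
        (hW_meas.comp ((measurable_pi_apply (t+1)).prodMk ((hτ (t+1)).comp (hhist (t+1)))))
        Cv (fun ω => hW_bd _), hfs (t+1) τ hτ x]
      refine integral_congr_ae (Filter.Eventually.of_forall fun s₁ => ?_)
      refine Eq.trans ?_ (ih (shiftPol τ x) (measurable_shiftPol hτ x) s₁)
      refine integral_congr_ae (Filter.Eventually.of_forall fun ω => ?_)
      have key : (∫ s', Vπ s' ∂(K (prepend x ω (t+1), τ (t+1) fun i => prepend x ω ↑i)))
          = ∫ s', Vπ s' ∂(K (ω t, shiftPol τ x t fun i => ω ↑i)) := by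
        rw [show (fun i : Fin (t+1+1) => prepend x ω ↑i)
            = Fin.cases x (fun i : Fin (t+1) => ω ↑i) from prepend_hist x ω t]
        rfl
      exact key
  -- measurability and bounds for the summands
  have mR : ∀ t, Measurable fun ω : ℕ → S => r (ω t, σ t fun i => ω i) :=
    fun t => hr_meas.comp ((measurable_pi_apply t).prodMk ((hσ_meas t).comp (hhist t)))
  have mWt : ∀ t, Measurable fun ω : ℕ → S => ∫ s', Vπ s' ∂(K (ω t, σ t fun i => ω i)) :=
    fun t => hW_meas.comp ((measurable_pi_apply t).prodMk ((hσ_meas t).comp (hhist t)))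
  have mVt : ∀ t, Measurable fun ω : ℕ → S => Vπ (ω t) :=
    fun t => hV_meas.comp (measurable_pi_apply t)
  have mu : ∀ t, Measurable fun ω : ℕ → S => δ ^ t * (1 - δ) * r (ω t, σ t fun i => ω i) :=
    fun t => measurable_const.mul (mR t)
  have mw : ∀ t, Measurable fun ω : ℕ → S => δ ^ t *
      ((1 - δ) * r (ω t, σ t fun i => ω i)
        + δ * (∫ s', Vπ s' ∂(K (ω t, σ t fun i => ω i))) - Vπ (ω t)) :=
    fun t => measurable_const.mul
      (((measurable_const.mul (mR t)).add (measurable_const.mul (mWt t))).sub (mVt t))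
  have hbu : ∀ (t : ℕ) (ω : ℕ → S),
      |δ ^ t * (1 - δ) * r (ω t, σ t fun i => ω i)| ≤ δ ^ t * ((1 - δ) * Cr) := by
    intro t ω
    rw [mul_assoc, abs_mul, abs_of_nonneg (hδt t)]
    refine mul_le_mul_of_nonneg_left ?_ (hδt t)
    rw [abs_mul, abs_of_nonneg h1δ]
    exact mul_le_mul_of_nonneg_left (hCr _) h1δ
  have hbw : ∀ (t : ℕ) (ω : ℕ → S),
      |δ ^ t * ((1 - δ) * r (ω t, σ t fun i => ω i)
        + δ * (∫ s', Vπ s' ∂(K (ω t, σ t fun i => ω i))) - Vπ (ω t))|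
      ≤ δ ^ t * ((1 - δ) * Cr + δ * Cv + Cv) := by
    intro t ω
    rw [abs_mul, abs_of_nonneg (hδt t)]
    refine mul_le_mul_of_nonneg_left ?_ (hδt t)
    have h1 : |(1 - δ) * r (ω t, σ t fun i => ω i)| ≤ (1 - δ) * Cr := by
      rw [abs_mul, abs_of_nonneg h1δ]
      exact mul_le_mul_of_nonneg_left (hCr _) h1δ
    have h2 : |δ * ∫ s', Vπ s' ∂(K (ω t, σ t fun i => ω i))| ≤ δ * Cv := by
      rw [abs_mul, abs_of_nonneg hδ0']
      exact mul_le_mul_of_nonneg_left (hW_bd _) hδ0'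
    have h3 : |Vπ (ω t)| ≤ Cv := hCv _
    have a1 := abs_le.mp h1
    have a2 := abs_le.mp h2
    have a3 := abs_le.mp h3
    exact abs_le.mpr (by constructor <;> linarith [a1.1, a1.2, a2.1, a2.2, a3.1, a3.2])
  have geom : ∀ M : ℝ, Summable fun t : ℕ => δ ^ t * M :=
    fun M => (summable_geometric_of_lt_one hδ0' hδ1).mul_right M
  have key_fin : ∀ (g : ℕ → (ℕ → S) → ℝ) (M : ℝ), 0 ≤ M → (∀ t ω, |g t ω| ≤ δ ^ t * M) →
      ∑' t, ∫⁻ ω, ‖g t ω‖₊ ∂(Pσ σ s) ≠ ⊤ := by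
    intro g M hM hb
    have hle : ∀ t, ∫⁻ ω, ‖g t ω‖₊ ∂(Pσ σ s) ≤ ENNReal.ofReal (δ ^ t * M) := by
      intro t
      calc ∫⁻ ω, (‖g t ω‖₊ : ENNReal) ∂(Pσ σ s)
          ≤ ∫⁻ _, ENNReal.ofReal (δ ^ t * M) ∂(Pσ σ s) := by
            refine lintegral_mono fun ω => ?_
            rw [← enorm_eq_nnnorm, Real.enorm_eq_ofReal_abs]
            exact ENNReal.ofReal_le_ofReal (hb t ω)
        _ = ENNReal.ofReal (δ ^ t * M) := by simp [lintegral_const, hPuniv]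
    refine ne_top_of_le_ne_top ?_ (ENNReal.tsum_le_tsum hle)
    rw [← ENNReal.ofReal_tsum_of_nonneg (fun t => mul_nonneg (hδt t) hM) (geom M)]
    exact ENNReal.ofReal_ne_top
  have hMu0 : 0 ≤ (1 - δ) * Cr := mul_nonneg h1δ hCr0
  have hMw0 : 0 ≤ (1 - δ) * Cr + δ * Cv + Cv := by positivity
  have hu_swap : ∫ ω, (∑' t : ℕ, δ ^ t * (1 - δ) * r (ω t, σ t fun i => ω i)) ∂(Pσ σ s)
      = ∑' t : ℕ, ∫ ω, δ ^ t * (1 - δ) * r (ω t, σ t fun i => ω i) ∂(Pσ σ s) :=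
    integral_tsum (fun t => (mu t).aestronglyMeasurable) (key_fin _ _ hMu0 hbu)
  have hw_swap : ∫ ω, (∑' t : ℕ, δ ^ t *
        ((1 - δ) * r (ω t, σ t fun i => ω i)
          + δ * (∫ s', Vπ s' ∂(K (ω t, σ t fun i => ω i))) - Vπ (ω t))) ∂(Pσ σ s)
      = ∑' t : ℕ, ∫ ω, δ ^ t *
          ((1 - δ) * r (ω t, σ t fun i => ω i)
            + δ * (∫ s', Vπ s' ∂(K (ω t, σ t fun i => ω i))) - Vπ (ω t)) ∂(Pσ σ s) :=
    integral_tsum (fun t => (mw t).aestronglyMeasurable) (key_fin _ _ hMw0 hbw)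
  -- term-wise computation
  have hint_r : ∀ t, Integrable (fun ω => r (ω t, σ t fun i => ω i)) (Pσ σ s) :=
    fun t => bdd_integrable _ (mR t) (fun ω => hCr _)
  have hint_W : ∀ t, Integrable (fun ω => ∫ s', Vπ s' ∂(K (ω t, σ t fun i => ω i))) (Pσ σ s) :=
    fun t => bdd_integrable _ (mWt t) (fun ω => hW_bd _)
  have hint_V : ∀ t, Integrable (fun ω => Vπ (ω t)) (Pσ σ s) :=
    fun t => bdd_integrable _ (mVt t) (fun ω => hCv _)
  have hterm : ∀ t : ℕ, ∫ ω, δ ^ t *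
        ((1 - δ) * r (ω t, σ t fun i => ω i)
          + δ * (∫ s', Vπ s' ∂(K (ω t, σ t fun i => ω i))) - Vπ (ω t)) ∂(Pσ σ s)
      = (∫ ω, δ ^ t * (1 - δ) * r (ω t, σ t fun i => ω i) ∂(Pσ σ s))
        + (δ ^ (t+1) * (∫ ω, Vπ (ω (t+1)) ∂(Pσ σ s)) - δ ^ t * ∫ ω, Vπ (ω t) ∂(Pσ σ s)) := by
    intro t
    have hI1 : Integrable (fun ω => (1 - δ) * r (ω t, σ t fun i => ω i)
        + δ * ∫ s', Vπ s' ∂(K (ω t, σ t fun i => ω i))) (Pσ σ s) := by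
      exact ((hint_r t).const_mul _).add ((hint_W t).const_mul _)
    have hI2 : Integrable (fun ω => (1 - δ) * r (ω t, σ t fun i => ω i)) (Pσ σ s) :=
      (hint_r t).const_mul _
    have hI3 : Integrable (fun ω => δ * ∫ s', Vπ s' ∂(K (ω t, σ t fun i => ω i))) (Pσ σ s) :=
      (hint_W t).const_mul _
    rw [integral_const_mul]
    rw [integral_sub hI1 (hint_V t)]
    rw [integral_add hI2 hI3]
    rw [integral_const_mul, integral_const_mul, integral_const_mul]
    rw [hA t σ hσ_meas s]
    ring
  -- bounds for the value sequence
  have hFbd : ∀ t, |∫ ω, Vπ (ω t) ∂(Pσ σ s)| ≤ Cv :=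
    fun t => abs_integral_le _ (fun ω => hCv _)
  have hbbd : ∀ t, |δ ^ t * ∫ ω, Vπ (ω t) ∂(Pσ σ s)| ≤ δ ^ t * Cv := fun t => by
    rw [abs_mul, abs_of_nonneg (hδt t)]
    exact mul_le_mul_of_nonneg_left (hFbd t) (hδt t)
  have htel_sum : Summable fun t : ℕ =>
      δ ^ (t+1) * (∫ ω, Vπ (ω (t+1)) ∂(Pσ σ s)) - δ ^ t * ∫ ω, Vπ (ω t) ∂(Pσ σ s) := by
    refine Summable.of_norm_bounded (g := fun t => δ ^ t * (δ * Cv) + δ ^ t * Cv)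
      (Summable.add (geom _) (geom _)) fun t => ?_
    beta_reduce
    rw [Real.norm_eq_abs]
    have h1 := abs_le.mp (hbbd (t+1))
    have h2 := abs_le.mp (hbbd t)
    have e : δ ^ (t+1) * Cv = δ ^ t * (δ * Cv) := by ring
    exact abs_le.mpr ⟨by linarith [h1.1, h2.2], by linarith [h1.2, h2.1]⟩
  have hblim : Filter.Tendsto (fun t => δ ^ t * ∫ ω, Vπ (ω t) ∂(Pσ σ s))
      Filter.atTop (nhds 0) := by
    have h0 : Filter.Tendsto (fun t : ℕ => δ ^ t * Cv) Filter.atTop (nhds 0) := by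
      simpa using (tendsto_pow_atTop_nhds_zero_of_lt_one hδ0' hδ1).mul_const Cv
    refine squeeze_zero_norm (fun t => ?_) h0
    rw [Real.norm_eq_abs]
    exact hbbd t
  have htel : ∑' t : ℕ, (δ ^ (t+1) * (∫ ω, Vπ (ω (t+1)) ∂(Pσ σ s))
      - δ ^ t * ∫ ω, Vπ (ω t) ∂(Pσ σ s)) = -Vπ s := by
    have h1 := htel_sum.hasSum.tendsto_sum_nat
    have h2 : ∀ n : ℕ, ∑ i ∈ Finset.range n,
        (δ ^ (i+1) * (∫ ω, Vπ (ω (i+1)) ∂(Pσ σ s)) - δ ^ i * ∫ ω, Vπ (ω i) ∂(Pσ σ s))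
        = δ ^ n * (∫ ω, Vπ (ω n) ∂(Pσ σ s)) - δ ^ 0 * ∫ ω, Vπ (ω 0) ∂(Pσ σ s) :=
      fun n => Finset.sum_range_sub (fun t => δ ^ t * ∫ ω, Vπ (ω t) ∂(Pσ σ s)) n
    simp only [h2] at h1
    have h3 : Filter.Tendsto
        (fun n : ℕ => δ ^ n * (∫ ω, Vπ (ω n) ∂(Pσ σ s)) - δ ^ 0 * ∫ ω, Vπ (ω 0) ∂(Pσ σ s))
        Filter.atTop (nhds (0 - δ ^ 0 * ∫ ω, Vπ (ω 0) ∂(Pσ σ s))) := hblim.sub_const _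
    have h4 := tendsto_nhds_unique h1 h3
    rw [h4, hf0 σ hσ_meas s]
    simp
  have hsum_u : Summable fun t : ℕ =>
      ∫ ω, δ ^ t * (1 - δ) * r (ω t, σ t fun i => ω i) ∂(Pσ σ s) := by
    refine Summable.of_norm_bounded (g := fun t => δ ^ t * ((1 - δ) * Cr)) (geom _) fun t => ?_
    rw [Real.norm_eq_abs]
    exact abs_integral_le _ (hbu t)
  have hw_eq : (∑' t : ℕ, ∫ ω, δ ^ t *
        ((1 - δ) * r (ω t, σ t fun i => ω i)
          + δ * (∫ s', Vπ s' ∂(K (ω t, σ t fun i => ω i))) - Vπ (ω t)) ∂(Pσ σ s))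
      = (∑' t : ℕ, ∫ ω, δ ^ t * (1 - δ) * r (ω t, σ t fun i => ω i) ∂(Pσ σ s)) + -Vπ s := by
    rw [tsum_congr hterm, Summable.tsum_add hsum_u htel_sum, htel]
  rw [hu_swap, hw_swap, hw_eq]
  ring
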